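/- Let α, λ, h > 0, S > 0, and L > 0. The minimum of g(u_lo, u_of) = α u_lo³ + λ u_of³ / h + α S (L - u_lo - u_of)³ over the simplex {u_lo ≥ 0, u_of ≥ 0, u_lo + u_of ≤ L} is attained at u_lo* = L (1 + 1/√S + √(α h / λ))^{-1} and u_of* = √(α h / λ) · u_lo*, and equals α L³ (1 + 1/√S + √(α h / λ))^{-2}. -/

import Mathlib

lemma cube_tangent (t c : ℝ) (ht : 0 ≤ t) (hc : 0 ≤ c) :
    3 * c ^ 2 * t - 2 * c ^ 3 ≤ t ^ 3 := by
  nlinarith [mul_nonneg (sq_nonneg (t - c)) (by linarith : (0:ℝ) ≤ t + 2 * c)]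

theorem stmt_5 (α lam h S L : ℝ) (hα : 0 < α) (hlam : 0 < lam) (hh : 0 < h) (hS : 0 < S)
    (hL : 0 < L) :
    IsMinOn (fun p : ℝ × ℝ => α * p.1 ^ 3 + lam * p.2 ^ 3 / h + α * S * (L - p.1 - p.2) ^ 3)
      {p : ℝ × ℝ | 0 ≤ p.1 ∧ 0 ≤ p.2 ∧ p.1 + p.2 ≤ L}
      (L / (1 + 1 / Real.sqrt S + Real.sqrt (α * h / lam)),
       Real.sqrt (α * h / lam) * (L / (1 + 1 / Real.sqrt S + Real.sqrt (α * h / lam)))) ∧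
    (fun p : ℝ × ℝ => α * p.1 ^ 3 + lam * p.2 ^ 3 / h + α * S * (L - p.1 - p.2) ^ 3)
      (L / (1 + 1 / Real.sqrt S + Real.sqrt (α * h / lam)),
       Real.sqrt (α * h / lam) * (L / (1 + 1 / Real.sqrt S + Real.sqrt (α * h / lam))))
      = α * L ^ 3 / (1 + 1 / Real.sqrt S + Real.sqrt (α * h / lam)) ^ 2 := by
  set s := Real.sqrt S with hsdef
  set r := Real.sqrt (α * h / lam) with hrdef
  have hs0 : 0 < s := Real.sqrt_pos.mpr hS
  have hs2 : s ^ 2 = S := Real.sq_sqrt hS.le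
  have hr0 : 0 < r := Real.sqrt_pos.mpr (by positivity)
  have hr2 : r ^ 2 = α * h / lam := Real.sq_sqrt (by positivity)
  have hlr : lam * r ^ 2 = α * h := by
    rw [hr2]; field_simp
  set D := 1 + 1 / s + r with hDdef
  have hD0 : 0 < D := by positivity
  set a := L / D with hadef
  have ha0 : 0 < a := by positivity
  have haD : a * D = L := div_mul_cancel₀ L hD0.ne'
  clear_value a D s r
  have hsum : a + r * a + a / s = L := by
    rw [← haD, hDdef]
    field_simp
    ring
  have hc : L - a - r * a = a / s := by linarith
  -- coefficient identities
  have e2 : lam * (r * a) ^ 2 / h = α * a ^ 2 := by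
    field_simp
    linear_combination hlr
  have e3 : α * S * (a / s) ^ 2 = α * a ^ 2 := by
    rw [← hs2, div_pow]
    field_simp
  -- value at the candidate point
  have hval : α * a ^ 3 + lam * (r * a) ^ 3 / h + α * S * (L - a - r * a) ^ 3
      = α * a ^ 2 * L := by
    rw [hc]
    have h1 : lam * (r * a) ^ 3 / h = (lam * (r * a) ^ 2 / h) * (r * a) := by ring
    have h2 : α * S * (a / s) ^ 3 = (α * S * (a / s) ^ 2) * (a / s) := by ring
    rw [h1, h2, e2, e3]
    linear_combination (α * a ^ 2) * hsum
  have hval2 : α * a ^ 2 * L = α * L ^ 3 / D ^ 2 := by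
    rw [hadef]
    field_simp
  constructor
  · rw [isMinOn_iff]
    rintro p ⟨hp1, hp2, hp3⟩
    simp only
    rw [hval]
    have k1 := cube_tangent p.1 a hp1 ha0.le
    have k2 := cube_tangent p.2 (r * a) hp2 (by positivity)
    have k3 := cube_tangent (L - p.1 - p.2) (a / s) (by linarith) (by positivity)
    have m1 : 3 * (α * a ^ 2) * p.1 - 2 * (α * a ^ 2) * a ≤ α * p.1 ^ 3 := by
      nlinarith [mul_le_mul_of_nonneg_left k1 hα.le]
    have m2 : 3 * (α * a ^ 2) * p.2 - 2 * (α * a ^ 2) * (r * a) ≤ lam * p.2 ^ 3 / h := by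
      have hk := mul_le_mul_of_nonneg_left k2 (by positivity : (0:ℝ) ≤ lam / h)
      have heq : lam / h * (3 * (r * a) ^ 2 * p.2 - 2 * (r * a) ^ 3)
          = 3 * (α * a ^ 2) * p.2 - 2 * (α * a ^ 2) * (r * a) := by
        have : lam / h * (3 * (r * a) ^ 2 * p.2 - 2 * (r * a) ^ 3)
            = 3 * (lam * (r * a) ^ 2 / h) * p.2 - 2 * (lam * (r * a) ^ 2 / h) * (r * a) := by
          ring
        rw [this, e2]
      rw [heq] at hk
      calc 3 * (α * a ^ 2) * p.2 - 2 * (α * a ^ 2) * (r * a)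
          ≤ lam / h * p.2 ^ 3 := hk
        _ = lam * p.2 ^ 3 / h := by ring
    have m3 : 3 * (α * a ^ 2) * (L - p.1 - p.2) - 2 * (α * a ^ 2) * (a / s)
        ≤ α * S * (L - p.1 - p.2) ^ 3 := by
      have hk := mul_le_mul_of_nonneg_left k3 (by positivity : (0:ℝ) ≤ α * S)
      have heq : α * S * (3 * (a / s) ^ 2 * (L - p.1 - p.2) - 2 * (a / s) ^ 3)
          = 3 * (α * a ^ 2) * (L - p.1 - p.2) - 2 * (α * a ^ 2) * (a / s) := by
        have : α * S * (3 * (a / s) ^ 2 * (L - p.1 - p.2) - 2 * (a / s) ^ 3)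
            = 3 * (α * S * (a / s) ^ 2) * (L - p.1 - p.2)
              - 2 * (α * S * (a / s) ^ 2) * (a / s) := by ring
        rw [this, e3]
      rw [heq] at hk
      exact hk
    have hsum2 : 2 * (α * a ^ 2) * a + 2 * (α * a ^ 2) * (r * a)
        + 2 * (α * a ^ 2) * (a / s) = 2 * (α * a ^ 2) * L := by
      linear_combination (2 * α * a ^ 2) * hsum
    linarith
  · simp only
    rw [hval, hval2]
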